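/- Fix δ₁ > 0 and δ₂ > 0 with δ₁ + δ₂ < 1 and set ξ = 1 − δ₁ − δ₂. There exist constants F₀ > 0, F₁ > 0, F₂ > 0 (depending only on δ₁ and δ₂) such that for every r₀ with 0 < r₀ ≤ 2·ξ²·log₂ e, setting r = (1/ξ)·√(r₀/(2·log₂ e)) and N = ⌊1/r⌋ and letting Γ* = { (δ₁ + ξ·a/N, 1 − δ₁ − ξ·a/N) : a = 0,…,N }, every P ∈ Γ* and every Q ∈ Γ* differing from P by exactly ±ξ/N in the first coordinate (and ∓ξ/N in the second) satisfy F₀·r₀ ≤ V(P‖Q) ≤ F₁·r₀ and T(P‖Q) ≤ F₂·r₀^{3/2}. -/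

import Mathlib

/-- Kullback–Leibler divergence in bits between two (strictly positive) probability
vectors on `Fin k`. -/
noncomputable def klD {k : ℕ} (P Q : Fin k → ℝ) : ℝ :=
  ∑ y, P y * Real.logb 2 (P y / Q y)

/-- Variance of the log-likelihood ratio (in bits). -/
noncomputable def Vllr {k : ℕ} (P Q : Fin k → ℝ) : ℝ :=
  ∑ y, P y * (Real.logb 2 (P y / Q y) - klD P Q) ^ 2

/-- Third absolute central moment of the log-likelihood ratio (in bits). -/
noncomputable def Tllr {k : ℕ} (P Q : Fin k → ℝ) : ℝ :=
  ∑ y, P y * |Real.logb 2 (P y / Q y) - klD P Q| ^ 3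

lemma V_formula (p q : ℝ) :
    Vllr ![p, 1-p] ![q, 1-q]
      = p * (1-p) * (Real.logb 2 (p/q) - Real.logb 2 ((1-p)/(1-q))) ^ 2 := by
  simp only [Vllr, klD, Fin.sum_univ_two, Matrix.cons_val_zero, Matrix.cons_val_one,
    Matrix.head_cons]
  ring

lemma Tllr_le (p q : ℝ) (hp0 : 0 ≤ p) (hp1 : p ≤ 1) :
    Tllr ![p, 1-p] ![q, 1-q]
      ≤ |Real.logb 2 (p/q) - Real.logb 2 ((1-p)/(1-q))| ^ 3 := by
  have h1 : (0:ℝ) ≤ 1 - p := by linarith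
  simp only [Tllr, klD, Fin.sum_univ_two, Matrix.cons_val_zero, Matrix.cons_val_one,
    Matrix.head_cons]
  set L0 := Real.logb 2 (p/q) with hL0
  set L1 := Real.logb 2 ((1-p)/(1-q)) with hL1
  have e0 : L0 - (p * L0 + (1-p) * L1) = (1-p) * (L0 - L1) := by ring
  have e1 : L1 - (p * L0 + (1-p) * L1) = -(p * (L0 - L1)) := by ring
  rw [e0, e1, abs_neg, abs_mul, abs_mul, abs_of_nonneg h1, abs_of_nonneg hp0]
  set c := |L0 - L1| with hc
  have hc0 : 0 ≤ c := abs_nonneg _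
  nlinarith [pow_nonneg hc0 3, mul_nonneg hp0 h1, sq_nonneg (p - (1-p)),
    mul_nonneg (mul_nonneg hp0 h1) (pow_nonneg hc0 3)]

lemma log_diff_bounds {a b : ℝ} (ha : 0 < a) (hab : a ≤ b) (hb1 : b ≤ 1) :
    b - a ≤ Real.log b - Real.log a ∧ Real.log b - Real.log a ≤ (b - a) / a := by
  have hb : 0 < b := lt_of_lt_of_le ha hab
  constructor
  · have h := Real.log_le_sub_one_of_pos (show (0:ℝ) < a / b by positivity)
    rw [Real.log_div ha.ne' hb.ne'] at h
    have hh : Real.log b - Real.log a ≥ (b - a) / b := by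
      have : a / b - 1 = -((b - a) / b) := by field_simp; ring
      linarith [this ▸ h]
    have : (b - a) / b ≥ b - a := by
      rw [ge_iff_le, le_div_iff₀ hb]
      nlinarith
    linarith
  · have h := Real.log_le_sub_one_of_pos (show (0:ℝ) < b / a by positivity)
    rw [Real.log_div hb.ne' ha.ne'] at h
    have : b / a - 1 = (b - a) / a := by field_simp
    linarith [this ▸ h]

lemma delta_bounds (δ₁ δ₂ ε p q : ℝ) (h1 : 0 < δ₁) (h2 : 0 < δ₂) (hε : 0 < ε)
    (hp : δ₁ ≤ p) (hp' : p ≤ 1 - δ₂) (hq : δ₁ ≤ q) (hq' : q ≤ 1 - δ₂)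
    (hpq : q = p + ε) :
    ε / Real.log 2 ≤ |Real.logb 2 (p/q) - Real.logb 2 ((1-p)/(1-q))| ∧
    |Real.logb 2 (p/q) - Real.logb 2 ((1-p)/(1-q))| ≤ ε * (1/δ₁ + 1/δ₂) / Real.log 2 := by
  have hlog2 : (0:ℝ) < Real.log 2 := Real.log_pos (by norm_num)
  have hp0 : 0 < p := lt_of_lt_of_le h1 hp
  have hq0 : 0 < q := lt_of_lt_of_le h1 hq
  have h1p : 0 < 1 - p := by linarith
  have h1q : 0 < 1 - q := by linarith
  have hA := log_diff_bounds hp0 (by linarith : p ≤ q) (by linarith : q ≤ 1)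
  have hB := log_diff_bounds h1q (by linarith : 1 - q ≤ 1 - p) (by linarith : 1 - p ≤ 1)
  have hAlo : ε ≤ Real.log q - Real.log p := by
    have := hA.1; linarith
  have hAhi : Real.log q - Real.log p ≤ ε / δ₁ := by
    have h := hA.2
    rw [show q - p = ε from by rw [hpq]; ring] at h
    have h2 : ε / p ≤ ε / δ₁ := by gcongr
    linarith
  have hBlo : ε ≤ Real.log (1-p) - Real.log (1-q) := by
    have := hB.1; linarith
  have hBhi : Real.log (1-p) - Real.log (1-q) ≤ ε / δ₂ := by
    have h := hB.2
    rw [show (1-p) - (1-q) = ε from by rw [hpq]; ring] at h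
    have hq2 : δ₂ ≤ 1 - q := by linarith
    have h2 : ε / (1-q) ≤ ε / δ₂ := by gcongr
    linarith
  have hexpr : Real.logb 2 (p/q) - Real.logb 2 ((1-p)/(1-q))
      = -(((Real.log q - Real.log p) + (Real.log (1-p) - Real.log (1-q))) / Real.log 2) := by
    rw [Real.logb, Real.logb, Real.log_div hp0.ne' hq0.ne', Real.log_div h1p.ne' h1q.ne']
    ring
  rw [hexpr, abs_neg, abs_of_nonneg (div_nonneg (by linarith) hlog2.le)]
  constructor
  · exact (div_le_div_iff_of_pos_right hlog2).mpr (by linarith)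
  · rw [show ε * (1/δ₁ + 1/δ₂) / Real.log 2 = (ε/δ₁ + ε/δ₂) / Real.log 2 by ring]
    exact (div_le_div_iff_of_pos_right hlog2).mpr (by linarith)

lemma logb_antisymm {p q : ℝ} (hp0 : 0 < p) (hq0 : 0 < q) (h1p : 0 < 1 - p) (h1q : 0 < 1 - q) :
    Real.logb 2 (p/q) - Real.logb 2 ((1-p)/(1-q))
      = -(Real.logb 2 (q/p) - Real.logb 2 ((1-q)/(1-p))) := by
  rw [Real.logb, Real.logb, Real.logb, Real.logb,
    Real.log_div hp0.ne' hq0.ne', Real.log_div h1p.ne' h1q.ne',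
    Real.log_div hq0.ne' hp0.ne', Real.log_div h1q.ne' h1p.ne']
  ring

set_option maxHeartbeats 800000 in
/-- for the binary grid `Γ* = {(δ₁ + ξ·a/N, 1 − δ₁ − ξ·a/N) : a = 0,…,N}`
there are constants `F₀, F₁, F₂ > 0` (depending only on `δ₁, δ₂`) such that for every
`0 < r₀ ≤ 2ξ²·log₂ e`, every pair of adjacent grid points `P, Q` (first coordinates
differing by exactly `±ξ/N`) satisfies `F₀·r₀ ≤ V(P‖Q) ≤ F₁·r₀` and
`T(P‖Q) ≤ F₂·r₀^{3/2}`. -/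
theorem binary_llr_moment_bounds (δ₁ δ₂ : ℝ) (h1 : 0 < δ₁) (h2 : 0 < δ₂)
    (h12 : δ₁ + δ₂ < 1) (ξ : ℝ) (hξ : ξ = 1 - δ₁ - δ₂) :
    ∃ F₀ F₁ F₂ : ℝ, 0 < F₀ ∧ 0 < F₁ ∧ 0 < F₂ ∧
      ∀ r₀ : ℝ, 0 < r₀ → r₀ ≤ 2 * ξ ^ 2 * Real.logb 2 (Real.exp 1) →
        ∀ r : ℝ, r = (1 / ξ) * Real.sqrt (r₀ / (2 * Real.logb 2 (Real.exp 1))) →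
          ∀ N : ℕ, N = ⌊1 / r⌋₊ →
            ∀ P Q : Fin 2 → ℝ,
              (∃ a : ℕ, a ≤ N ∧ P = ![δ₁ + ξ * (a : ℝ) / N, 1 - δ₁ - ξ * (a : ℝ) / N]) →
              (∃ b : ℕ, b ≤ N ∧ Q = ![δ₁ + ξ * (b : ℝ) / N, 1 - δ₁ - ξ * (b : ℝ) / N]) →
              (Q 0 = P 0 + ξ / N ∨ Q 0 = P 0 - ξ / N) →
              F₀ * r₀ ≤ Vllr P Q ∧ Vllr P Q ≤ F₁ * r₀ ∧
                Tllr P Q ≤ F₂ * r₀ ^ ((3 : ℝ) / 2) := by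
  have hlog2 : (0:ℝ) < Real.log 2 := Real.log_pos (by norm_num)
  have hξ0 : 0 < ξ := by rw [hξ]; linarith
  set K : ℝ := 1/δ₁ + 1/δ₂ with hK
  have hK0 : 0 < K := by positivity
  refine ⟨δ₁ * δ₂ / (2 * Real.log 2), 2 * K^2 / Real.log 2,
    (2 * Real.log 2) ^ ((3:ℝ)/2) * (K / Real.log 2)^3,
    by positivity, by positivity, by positivity, ?_⟩
  intro r₀ hr₀ hr₀le r hr N hN P Q hP hQ hPQ
  have hL : Real.logb 2 (Real.exp 1) = 1 / Real.log 2 := by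
    rw [Real.logb, Real.log_exp]
  rw [hL] at hr₀le hr
  have harg : r₀ / (2 * (1 / Real.log 2)) = r₀ * Real.log 2 / 2 := by
    field_simp
  rw [harg] at hr
  set s : ℝ := Real.sqrt (r₀ * Real.log 2 / 2) with hs
  have hspos : 0 < s := Real.sqrt_pos.mpr (by positivity)
  have hs2 : s ^ 2 = r₀ * Real.log 2 / 2 := Real.sq_sqrt (by positivity)
  have hsξ : s ≤ ξ := by
    have h2' : s ^ 2 ≤ ξ ^ 2 := by
      rw [hs2]
      have hle : r₀ ≤ 2 * ξ^2 / Real.log 2 := by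
        rw [show 2 * ξ^2 / Real.log 2 = 2*ξ^2*(1/Real.log 2) by ring]
        exact hr₀le
      have := (le_div_iff₀ hlog2).mp hle
      linarith
    exact (pow_le_pow_iff_left₀ hspos.le hξ0.le two_ne_zero).mp h2'
  have hrs : r = s / ξ := by rw [hr]; ring
  have hrpos : 0 < r := by rw [hrs]; positivity
  have hir : 1 / r = ξ / s := by rw [hrs]; field_simp
  have hir1 : (1:ℝ) ≤ 1 / r := by
    rw [hir, le_div_iff₀ hspos]; linarith
  have hN1 : 1 ≤ N := by
    rw [hN]
    exact Nat.le_floor (by exact_mod_cast hir1)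
  have hNpos : (0:ℝ) < (N:ℝ) := by exact_mod_cast hN1
  have hNle : (N:ℝ) ≤ 1 / r := by
    rw [hN]; exact Nat.floor_le (by linarith)
  have hN1' : (1:ℝ) ≤ (N:ℝ) := by exact_mod_cast hN1
  have hNge : 1 / r ≤ 2 * (N:ℝ) := by
    rcases le_or_gt 2 (1/r) with h | h
    · have hfl : 1/r - 1 < (⌊1/r⌋₊ : ℝ) := Nat.sub_one_lt_floor _
      rw [hN]
      linarith
    · linarith
  set ε : ℝ := ξ / N with hε
  have hεpos : 0 < ε := by positivity
  have hNle' : (N:ℝ) * s ≤ ξ := by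
    rw [hir, le_div_iff₀ hspos] at hNle
    exact hNle
  have hNge' : ξ ≤ 2 * (N:ℝ) * s := by
    rw [hir, div_le_iff₀ hspos] at hNge
    linarith
  have hεlo : s ≤ ε := by
    rw [hε, le_div_iff₀ hNpos]
    linarith [mul_comm s (N:ℝ)]
  have hεhi : ε ≤ 2 * s := by
    rw [hε, div_le_iff₀ hNpos]
    linarith [mul_comm s (N:ℝ), mul_comm (2*s) (N:ℝ)]
  have hε2lo : r₀ * Real.log 2 / 2 ≤ ε ^ 2 := by
    rw [← hs2]
    exact pow_le_pow_left₀ hspos.le hεlo 2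
  have hε2hi : ε ^ 2 ≤ 2 * Real.log 2 * r₀ := by
    calc ε ^ 2 ≤ (2*s)^2 := pow_le_pow_left₀ hεpos.le hεhi 2
    _ = 4 * s^2 := by ring
    _ = 2 * Real.log 2 * r₀ := by rw [hs2]; ring
  -- grid points
  obtain ⟨a, haN, hPdef⟩ := hP
  obtain ⟨b, hbN, hQdef⟩ := hQ
  set p : ℝ := δ₁ + ξ * (a:ℝ) / N with hpdef
  set q : ℝ := δ₁ + ξ * (b:ℝ) / N with hqdef
  have hP2 : P = ![p, 1 - p] := by
    rw [hPdef]
    funext i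
    fin_cases i <;> simp [hpdef] <;> ring
  have hQ2 : Q = ![q, 1 - q] := by
    rw [hQdef]
    funext i
    fin_cases i <;> simp [hqdef] <;> ring
  have hcastA : (a:ℝ) ≤ (N:ℝ) := by exact_mod_cast haN
  have hcastB : (b:ℝ) ≤ (N:ℝ) := by exact_mod_cast hbN
  have hpa : δ₁ ≤ p := by
    rw [hpdef]; have : 0 ≤ ξ * (a:ℝ) / N := by positivity
    linarith
  have hpb : p ≤ 1 - δ₂ := by
    rw [hpdef]
    have : ξ * (a:ℝ) / N ≤ ξ := by
      rw [div_le_iff₀ hNpos]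
      exact mul_le_mul_of_nonneg_left hcastA hξ0.le
    linarith [hξ ▸ this]
  have hqa : δ₁ ≤ q := by
    rw [hqdef]; have : 0 ≤ ξ * (b:ℝ) / N := by positivity
    linarith
  have hqb : q ≤ 1 - δ₂ := by
    rw [hqdef]
    have : ξ * (b:ℝ) / N ≤ ξ := by
      rw [div_le_iff₀ hNpos]
      exact mul_le_mul_of_nonneg_left hcastB hξ0.le
    linarith [hξ ▸ this]
  have hp0 : 0 < p := lt_of_lt_of_le h1 hpa
  have hq0 : 0 < q := lt_of_lt_of_le h1 hqa
  have h1p : 0 < 1 - p := by linarith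
  have h1q : 0 < 1 - q := by linarith
  have hp1 : p ≤ 1 := by linarith
  -- the adjacency condition in terms of p, q
  have hPQ' : q = p + ε ∨ p = q + ε := by
    rw [hP2, hQ2] at hPQ
    simp only [Matrix.cons_val_zero] at hPQ
    rcases hPQ with h | h
    · left; rw [h, hε]
    · right; rw [h, hε]; ring
  -- bounds on |Δ|
  set c : ℝ := |Real.logb 2 (p/q) - Real.logb 2 ((1-p)/(1-q))| with hc
  have hcb : ε / Real.log 2 ≤ c ∧ c ≤ ε * K / Real.log 2 := by
    rcases hPQ' with h | h
    · have := delta_bounds δ₁ δ₂ ε p q h1 h2 hεpos hpa hpb hqa hqb h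
      rw [hK]
      exact ⟨this.1, by rw [show ε * (1/δ₁ + 1/δ₂) / Real.log 2
        = ε * (1/δ₁ + 1/δ₂) / Real.log 2 from rfl]; exact this.2⟩
    · have hD := delta_bounds δ₁ δ₂ ε q p h1 h2 hεpos hqa hqb hpa hpb h
      have hanti := logb_antisymm hp0 hq0 h1p h1q
      rw [hc, hanti, abs_neg]
      rw [hK]
      exact ⟨hD.1, hD.2⟩
  have hclo := hcb.1
  have hchi := hcb.2
  have hc0 : 0 ≤ c := abs_nonneg _
  -- c² bounds
  have hc2lo : r₀ / (2 * Real.log 2) ≤ c ^ 2 := by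
    calc r₀ / (2 * Real.log 2) = (r₀ * Real.log 2 / 2) / (Real.log 2)^2 := by
          field_simp
    _ ≤ ε^2 / (Real.log 2)^2 := by gcongr
    _ = (ε / Real.log 2)^2 := by ring
    _ ≤ c^2 := pow_le_pow_left₀ (by positivity) hclo 2
  have hc2hi : c ^ 2 ≤ 2 * K^2 / Real.log 2 * r₀ := by
    calc c^2 ≤ (ε * K / Real.log 2)^2 := pow_le_pow_left₀ hc0 hchi 2
    _ = ε^2 * K^2 / (Real.log 2)^2 := by ring
    _ ≤ (2 * Real.log 2 * r₀) * K^2 / (Real.log 2)^2 := by gcongr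
    _ = 2 * K^2 / Real.log 2 * r₀ := by field_simp
  rw [hP2, hQ2, V_formula]
  rw [show (Real.logb 2 (p/q) - Real.logb 2 ((1-p)/(1-q))) ^ 2 = c ^ 2 from (sq_abs _).symm]
  refine ⟨?_, ?_, ?_⟩
  · have hpq1 : δ₁ * δ₂ ≤ p * (1 - p) :=
      mul_le_mul hpa (by linarith) h2.le hp0.le
    calc δ₁ * δ₂ / (2 * Real.log 2) * r₀ = (δ₁ * δ₂) * (r₀ / (2 * Real.log 2)) := by ring
    _ ≤ (p * (1-p)) * c^2 := by
        apply mul_le_mul hpq1 hc2lo (by positivity) (mul_nonneg hp0.le h1p.le)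
  · have hpq1 : p * (1 - p) ≤ 1 := mul_le_one₀ hp1 h1p.le (by linarith)
    calc (p * (1-p)) * c^2 ≤ 1 * (2 * K^2 / Real.log 2 * r₀) := by
          apply mul_le_mul hpq1 hc2hi (by positivity) (by norm_num)
    _ = 2 * K^2 / Real.log 2 * r₀ := by ring
  · have hT := Tllr_le p q hp0.le hp1
    have hc3 : c ^ 3 ≤ (ε * K / Real.log 2) ^ 3 := pow_le_pow_left₀ hc0 hchi 3
    have hε3 : ε ^ 3 ≤ (2 * Real.log 2) ^ ((3:ℝ)/2) * r₀ ^ ((3:ℝ)/2) := by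
      have h3 : (ε^2 : ℝ) ^ ((3:ℝ)/2) = ε ^ 3 := by
        rw [← Real.rpow_natCast ε 2, ← Real.rpow_mul hεpos.le, ← Real.rpow_natCast ε 3]
        norm_num
      have hmono : (ε^2 : ℝ) ^ ((3:ℝ)/2) ≤ (2 * Real.log 2 * r₀) ^ ((3:ℝ)/2) :=
        Real.rpow_le_rpow (sq_nonneg _) hε2hi (by norm_num)
      rw [h3] at hmono
      rw [← Real.mul_rpow (by positivity) hr₀.le]
      exact hmono
    calc Tllr ![p,1-p] ![q,1-q] ≤ c ^ 3 := hT
    _ ≤ (ε * K / Real.log 2) ^ 3 := hc3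
    _ = (K / Real.log 2)^3 * ε^3 := by ring
    _ ≤ (K / Real.log 2)^3 * ((2 * Real.log 2) ^ ((3:ℝ)/2) * r₀ ^ ((3:ℝ)/2)) := by
        apply mul_le_mul_of_nonneg_left hε3 (by positivity)
    _ = (2 * Real.log 2) ^ ((3:ℝ)/2) * (K / Real.log 2)^3 * r₀ ^ ((3:ℝ)/2) := by ring
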